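/- arXiv:cs/9911014 — 3 statements merged into one kernel-verified Lean document; each statement's English description precedes it below -/
import Mathlib

section
/- Every modal formula φ of the language L that is satisfiable with respect to the class F≤1 of frames in which every world has at most one successor is satisfied in a model based on a frame in F≤1 having at most md(φ)+1 worlds (a finite linear chain of length at most md(φ)). -/
namespace PoorMansModal

/-- Modal formulas over propositional variables of type `α`: variables `p`,
negated variables `p̄`, general negation, conjunction, disjunction, box, diamond,
and the constants `true` and `false`. -/
inductive Fml (α : Type) : Type where
  | var : α → Fml α
  | nvar : α → Fml α
  | neg : Fml α → Fml α
  | and : Fml α → Fml α → Fml α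
  | or : Fml α → Fml α → Fml α
  | box : Fml α → Fml α
  | dia : Fml α → Fml α
  | tru : Fml α
  | fls : Fml α

/-- A Kripke model: a nonempty set of worlds, an accessibility relation, and a valuation. -/
structure Kripke (α : Type) where
  World : Type
  nonempty : Nonempty World
  R : World → World → Prop
  V : α → World → Prop

/-- Truth of a formula at a world of a model. -/
def Sat {α : Type} (M : Kripke α) : Fml α → M.World → Prop
  | .var p, w => M.V p w
  | .nvar p, w => ¬ M.V p w
  | .neg φ, w => ¬ Sat M φ w
  | .and φ ψ, w => Sat M φ w ∧ Sat M ψ w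
  | .or φ ψ, w => Sat M φ w ∨ Sat M ψ w
  | .box φ, w => ∀ v, M.R w v → Sat M φ v
  | .dia φ, w => ∃ v, M.R w v ∧ Sat M φ v
  | .tru, _ => True
  | .fls, _ => False

/-- Modal depth: depth of nesting of `□` and `◇`. -/
def mdep {α : Type} : Fml α → ℕ
  | .var _ => 0
  | .nvar _ => 0
  | .neg φ => mdep φ
  | .and φ ψ => max (mdep φ) (mdep ψ)
  | .or φ ψ => max (mdep φ) (mdep ψ)
  | .box φ => mdep φ + 1
  | .dia φ => mdep φ + 1
  | .tru => 0
  | .fls => 0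

/-- Conjunction of a list of formulas; the empty conjunction is the always-true formula. -/
def bigConj {α : Type} : List (Fml α) → Fml α
  | [] => .tru
  | [φ] => φ
  | φ :: rest => .and φ (bigConj rest)

/-- `□^k φ`. -/
def boxI {α : Type} : ℕ → Fml α → Fml α
  | 0, φ => φ
  | k + 1, φ => .box (boxI k φ)

/-- `◇^k φ`. -/
def diaI {α : Type} : ℕ → Fml α → Fml α
  | 0, φ => φ
  | k + 1, φ => .dia (diaI k φ)

/-- `(◇□)^k φ`. -/
def diaBoxI {α : Type} : ℕ → Fml α → Fml α
  | 0, φ => φ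
  | k + 1, φ => .dia (.box (diaBoxI k φ))

/-- The literal with variable `l.1` and sign `l.2` (`true` = positive). -/
def litF {α : Type} (l : α × Bool) : Fml α := if l.2 then .var l.1 else .nvar l.1

/-- The variable `p` occurs in the formula. -/
def occursV {α : Type} (p : α) : Fml α → Prop
  | .var q => p = q
  | .nvar q => p = q
  | .neg φ => occursV p φ
  | .and φ ψ => occursV p φ ∨ occursV p ψ
  | .or φ ψ => occursV p φ ∨ occursV p ψ
  | .box φ => occursV p φ
  | .dia φ => occursV p φ
  | .tru => False
  | .fls => False

/-- Poor man's formulas: built from literals, `∧`, `□`, `◇` only. -/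
def PoorF {α : Type} : Fml α → Prop
  | .var _ => True
  | .nvar _ => True
  | .and φ ψ => PoorF φ ∧ PoorF ψ
  | .box φ => PoorF φ
  | .dia φ => PoorF φ
  | _ => False

/-- Formulas of the language `L`: built from literals, `∧`, `∨`, `□`, `◇`. -/
def InL {α : Type} : Fml α → Prop
  | .var _ => True
  | .nvar _ => True
  | .and φ ψ => InL φ ∧ InL ψ
  | .or φ ψ => InL φ ∧ InL ψ
  | .box φ => InL φ
  | .dia φ => InL φ
  | _ => False

/-- Every world has at most one successor. -/
def AtMostOne {W : Type} (R : W → W → Prop) : Prop :=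
  ∀ w v v', R w v → R w v' → v = v'

/-- Every world has at least one successor. -/
def AtLeastOne {W : Type} (R : W → W → Prop) : Prop :=
  ∀ w, ∃ v, R w v

/-- Every world has at most two successors. -/
def AtMostTwo {W : Type} (R : W → W → Prop) : Prop :=
  ∀ w v₁ v₂ v₃, R w v₁ → R w v₂ → R w v₃ → v₁ = v₂ ∨ v₁ = v₃ ∨ v₂ = v₃

/-- `chainR R n w v`: there is an `R`-path of length exactly `n` from `w` to `v`. -/
def chainR {W : Type} (R : W → W → Prop) : ℕ → W → W → Prop
  | 0, w, v => w = v
  | k + 1, w, v => ∃ u, R w u ∧ chainR R k u v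

/-- `R` is the parent-child relation of a rooted tree with root `root`
in which every node has at most two children. -/
structure IsBinTree {W : Type} (R : W → W → Prop) (root : W) : Prop where
  reach : ∀ w, Relation.ReflTransGen R root w
  root_no_parent : ∀ w, ¬ R w root
  unique_parent : ∀ w v v', R v w → R v' w → v = v'
  acyclic : ∀ w, ¬ Relation.TransGen R w w
  at_most_two_children : ∀ w v₁ v₂ v₃, R w v₁ → R w v₂ → R w v₃ → v₁ = v₂ ∨ v₁ = v₃ ∨ v₂ = v₃

/-- `φ_exp = ⋀_{i=1}^n □^{i-1}(◇□^{n-i} p_i ∧ ◇□^{n-i} p̄_i)`, with `p_i = var i`. -/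
def phiExp (n : ℕ) : Fml ℕ :=
  bigConj ((List.range n).map (fun j =>
    boxI j (.and (.dia (boxI (n - 1 - j) (.var (j + 1))))
                 (.dia (boxI (n - 1 - j) (.nvar (j + 1)))))))

/-- Satisfiability with respect to the class of all frames. -/
def SatAll (φ : Fml ℕ) : Prop := ∃ (M : Kripke ℕ) (w : M.World), Sat M φ w

/-- Satisfiability with respect to `F≤1`. -/
def SatLe1 (φ : Fml ℕ) : Prop := ∃ M : Kripke ℕ, AtMostOne M.R ∧ ∃ w, Sat M φ w

/-- Satisfiability with respect to `F≥1`. -/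
def SatGe1 (φ : Fml ℕ) : Prop := ∃ M : Kripke ℕ, AtLeastOne M.R ∧ ∃ w, Sat M φ w

/-- Satisfiability with respect to `F≤2`. -/
def SatLe2 (φ : Fml ℕ) : Prop := ∃ M : Kripke ℕ, AtMostTwo M.R ∧ ∃ w, Sat M φ w

/-- A one-world model with no successors, realizing the boolean assignment `v`;
truth at its world is propositional truth for formulas without modal operators. -/
def propModel (v : ℕ → Bool) : Kripke ℕ :=
  { World := Unit, nonempty := ⟨()⟩, R := fun _ _ => False, V := fun p _ => v p = true }

/-- Propositional satisfaction of `φ` under the assignment `v`. -/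
def PropSat (v : ℕ → Bool) (φ : Fml ℕ) : Prop := Sat (propModel v) φ ()


lemma chainR_snoc {W : Type} {R : W → W → Prop} :
    ∀ {k w v u}, chainR R k w v → R v u → chainR R (k + 1) w u := by
  intro k
  induction k with
  | zero => intro w v u h hr; cases h; exact ⟨u, hr, rfl⟩
  | succ k ih =>
    rintro w v u ⟨x, hx, hc⟩ hr
    exact ⟨x, hx, ih hc hr⟩

lemma chainR_unsnoc {W : Type} {R : W → W → Prop} :
    ∀ {k w u}, chainR R (k + 1) w u → ∃ x, chainR R k w x ∧ R x u := by
  intro k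
  induction k with
  | zero => rintro w u ⟨x, hx, hcx⟩; cases hcx; exact ⟨w, rfl, hx⟩
  | succ k ih =>
    rintro w u ⟨x, hx, hcx⟩
    obtain ⟨y, hy1, hy2⟩ := ih hcx
    exact ⟨y, ⟨x, hx, hy1⟩, hy2⟩

lemma chainR_fun {W : Type} {R : W → W → Prop} (h1 : AtMostOne R) :
    ∀ {k w u v}, chainR R k w u → chainR R k w v → u = v := by
  intro k
  induction k with
  | zero => intro w u v h h'; cases h; cases h'; rfl
  | succ k ih =>
    rintro w u v ⟨x, hx, hc⟩ ⟨y, hy, hc'⟩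
    cases h1 w x y hx hy
    exact ih hc hc'

/-- Every `L` formula satisfiable with respect to `F≤1` is satisfied in a
model based on a frame in `F≤1` having at most `md(φ) + 1` worlds. -/
theorem stmt0 (φ : Fml ℕ) (hφ : InL φ)
    (hsat : ∃ M : Kripke ℕ, AtMostOne M.R ∧ ∃ w, Sat M φ w) :
    ∃ M : Kripke ℕ, AtMostOne M.R ∧ Finite M.World ∧ Nat.card M.World ≤ mdep φ + 1 ∧
      ∃ w, Sat M φ w := by
  obtain ⟨M, hR, w, hw⟩ := hsat
  set n := mdep φ with hn
  refine ⟨⟨Fin (n + 1), ⟨0⟩,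
    fun i j => (j : ℕ) = (i : ℕ) + 1 ∧ ∃ u, chainR M.R ((i : ℕ) + 1) w u,
    fun p i => ∃ u, chainR M.R (i : ℕ) w u ∧ M.V p u⟩, ?_, ?_, ?_, ?_⟩
  · rintro i j j' ⟨hj, -⟩ ⟨hj', -⟩
    exact Fin.ext (hj.trans hj'.symm)
  · exact Finite.of_fintype _
  · simp [hn]
  · refine ⟨0, ?_⟩
    -- main simulation lemma
    suffices H : ∀ (ψ : Fml ℕ), InL ψ → ∀ (i : Fin (n + 1)) (v : M.World),
        (i : ℕ) + mdep ψ ≤ n → chainR M.R (i : ℕ) w v → Sat M ψ v →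
        Sat ⟨Fin (n + 1), ⟨0⟩,
          fun i j => (j : ℕ) = (i : ℕ) + 1 ∧ ∃ u, chainR M.R ((i : ℕ) + 1) w u,
          fun p i => ∃ u, chainR M.R (i : ℕ) w u ∧ M.V p u⟩ ψ i by
      exact H φ hφ 0 w (by simp [hn]) rfl hw
    intro ψ
    induction ψ with
    | var p => intro _ i v _ hc hs; exact ⟨v, hc, hs⟩
    | nvar p =>
      intro _ i v _ hc hs
      rintro ⟨u, hu, hVu⟩
      exact hs (chainR_fun hR hu hc ▸ hVu)
    | neg _ _ => intro h; exact absurd h (by simp [InL])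
    | and ψ χ ihψ ihχ =>
      rintro ⟨h1, h2⟩ i v hd hc ⟨hs1, hs2⟩
      simp only [mdep] at hd
      exact ⟨ihψ h1 i v (le_trans (by omega) hd) hc hs1,
             ihχ h2 i v (le_trans (by omega) hd) hc hs2⟩
    | or ψ χ ihψ ihχ =>
      rintro ⟨h1, h2⟩ i v hd hc (hs | hs)
      · simp only [mdep] at hd
        exact Or.inl (ihψ h1 i v (le_trans (by omega) hd) hc hs)
      · simp only [mdep] at hd
        exact Or.inr (ihχ h2 i v (le_trans (by omega) hd) hc hs)
    | box ψ ih =>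
      intro h1 i v hd hc hs
      simp only [mdep] at hd
      rintro j ⟨hj, u, hu⟩
      obtain ⟨x, hx, hxu⟩ := chainR_unsnoc hu
      cases chainR_fun hR hx hc
      have hcu : chainR M.R ((i : ℕ) + 1) w u := chainR_snoc hc hxu
      have : (j : ℕ) + mdep ψ ≤ n := by omega
      have hcj : chainR M.R (j : ℕ) w u := by rw [hj]; exact hcu
      exact ih h1 j u this hcj (hs u hxu)
    | dia ψ ih =>
      intro h1 i v hd hc hs
      simp only [mdep] at hd
      obtain ⟨u, hvu, hsu⟩ := hs
      have hi : (i : ℕ) + 1 < n + 1 := by omega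
      refine ⟨⟨(i : ℕ) + 1, hi⟩, ⟨rfl, u, chainR_snoc hc hvu⟩, ?_⟩
      exact ih h1 ⟨(i : ℕ) + 1, hi⟩ u (by simpa using by omega) (chainR_snoc hc hvu) hsu
    | tru => intro _ _ _ _ _ _; trivial
    | fls => intro h; exact absurd h (by simp [InL])

end PoorMansModal
end

section
/- Let φ = □ψ₁ ∧ ⋯ ∧ □ψ_k ∧ ◇ξ₁ ∧ ⋯ ∧ ◇ξ_m ∧ ℓ₁ ∧ ⋯ ∧ ℓ_s be a poor man's formula, where the ℓ_i are literals. Then φ is satisfiable with respect to F≤1 if and only if (1) for all i and j, ℓ_i is not the complement of ℓ_j, and (2) either m = 0, or the conjunction ψ₁ ∧ ⋯ ∧ ψ_k ∧ ξ₁ ∧ ⋯ ∧ ξ_m is satisfiable with respect to F≤1. -/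
namespace PoorMansModal

theorem sat_bigConj {α : Type} (M : Kripke α) (w : M.World) :
    ∀ L : List (Fml α), Sat M (bigConj L) w ↔ ∀ φ ∈ L, Sat M φ w
  | [] => by simp [bigConj, Sat]
  | [φ] => by simp [bigConj]
  | φ :: ψ :: rest => by
      have ih := sat_bigConj M w (ψ :: rest)
      show Sat M (.and φ (bigConj (ψ :: rest))) w ↔ _
      simp only [Sat, ih]
      constructor
      · rintro ⟨h1, h2⟩ χ hχ
        rcases List.mem_cons.mp hχ with rfl | hχ
        · exact h1
        · exact h2 _ hχ
      · intro h
        exact ⟨h φ (by simp), fun χ hχ => h χ (List.mem_cons_of_mem _ hχ)⟩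

/-- Extend a model with a fresh root whose unique successor is `v` and whose
valuation makes exactly the positive literals in `ls` true. -/
def extModel (M : Kripke ℕ) (v : M.World) (ls : List (ℕ × Bool)) : Kripke ℕ where
  World := Option M.World
  nonempty := ⟨none⟩
  R := fun x y => match x, y with
    | none, some b => b = v
    | some a, some b => M.R a b
    | _, none => False
  V := fun p x => match x with
    | none => (p, true) ∈ ls
    | some a => M.V p a

theorem sat_extModel (M : Kripke ℕ) (v : M.World) (ls : List (ℕ × Bool)) :
    ∀ (φ : Fml ℕ) (a : M.World),
      Sat (extModel M v ls) φ (some a) ↔ Sat M φ a := by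
  intro φ
  induction φ with
  | var p => intro a; rfl
  | nvar p => intro a; rfl
  | neg φ ih => intro a; exact not_congr (ih a)
  | and φ ψ ih1 ih2 => intro a; exact and_congr (ih1 a) (ih2 a)
  | or φ ψ ih1 ih2 => intro a; exact or_congr (ih1 a) (ih2 a)
  | box φ ih =>
      intro a
      constructor
      · intro h b hb
        exact (ih b).mp (h (some b) hb)
      · intro h x hx
        match x, hx with
        | some b, hb => exact (ih b).mpr (h b hb)
  | dia φ ih =>
      intro a
      constructor
      · rintro ⟨x, hx, hs⟩
        match x, hx, hs with
        | some b, hb, hs => exact ⟨b, hb, (ih b).mp hs⟩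
      · rintro ⟨b, hb, hs⟩
        exact ⟨some b, hb, (ih b).mpr hs⟩
  | tru => intro a; simp [Sat]
  | fls => intro a; simp [Sat]

theorem nolit_of_consistent {ls : List (ℕ × Bool)}
    (h : ∀ l ∈ ls, ∀ l' ∈ ls, ¬ (l.1 = l'.1 ∧ l.2 = !l'.2))
    {p : ℕ} (hp : (p, false) ∈ ls) : (p, true) ∉ ls := by
  intro hp'
  exact h _ hp _ hp' ⟨rfl, rfl⟩

/-- A poor man's formula
`φ = □ψ₁ ∧ ⋯ ∧ □ψ_k ∧ ◇ξ₁ ∧ ⋯ ∧ ◇ξ_m ∧ ℓ₁ ∧ ⋯ ∧ ℓ_s` is satisfiable with respect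
to `F≤1` iff no literal `ℓ_i` is the complement of a literal `ℓ_j`, and either `m = 0`
or `ψ₁ ∧ ⋯ ∧ ψ_k ∧ ξ₁ ∧ ⋯ ∧ ξ_m` is satisfiable with respect to `F≤1`. -/
theorem stmt1 (ψs ξs : List (Fml ℕ)) (ls : List (ℕ × Bool))
    (hψ : ∀ ψ ∈ ψs, PoorF ψ) (hξ : ∀ ξ ∈ ξs, PoorF ξ) :
    SatLe1 (bigConj (ψs.map .box ++ ξs.map .dia ++ ls.map litF)) ↔
      ((∀ l ∈ ls, ∀ l' ∈ ls, ¬ (l.1 = l'.1 ∧ l.2 = !l'.2)) ∧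
        (ξs = [] ∨ SatLe1 (bigConj (ψs ++ ξs)))) := by
  constructor
  · rintro ⟨M, hM, w, hw⟩
    rw [sat_bigConj] at hw
    simp only [List.mem_append, List.mem_map] at hw
    have hbox : ∀ ψ ∈ ψs, Sat M (.box ψ) w :=
      fun ψ hψ' => hw _ (Or.inl (Or.inl ⟨ψ, hψ', rfl⟩))
    have hdia : ∀ ξ ∈ ξs, Sat M (.dia ξ) w :=
      fun ξ hξ' => hw _ (Or.inl (Or.inr ⟨ξ, hξ', rfl⟩))
    have hlit : ∀ l ∈ ls, Sat M (litF l) w :=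
      fun l hl => hw _ (Or.inr ⟨l, hl, rfl⟩)
    constructor
    · rintro ⟨p, b⟩ hl ⟨p', b'⟩ hl' ⟨hp, hb⟩
      dsimp at hp hb
      subst hp
      have h1 := hlit _ hl
      have h2 := hlit _ hl'
      cases b' with
      | true => subst hb; exact (h1 : ¬ M.V p w) h2
      | false => subst hb; exact (h2 : ¬ M.V p w) h1
    · rcases ξs with _ | ⟨ξ, rest⟩
      · exact Or.inl rfl
      · right
        obtain ⟨u, hwu, hξu⟩ := hdia ξ (by simp)
        refine ⟨M, hM, u, ?_⟩
        rw [sat_bigConj]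
        intro χ hχ
        rw [List.mem_append] at hχ
        rcases hχ with hχ | hχ
        · exact hbox χ hχ u hwu
        · obtain ⟨u', hwu', hs⟩ := hdia χ hχ
          rwa [hM w u' u hwu' hwu] at hs
  · rintro ⟨hcon, hrest⟩
    rcases hrest with rfl | ⟨M, hM, v, hv⟩
    · refine ⟨⟨Unit, ⟨()⟩, fun _ _ => False, fun p _ => (p, true) ∈ ls⟩,
        fun _ _ _ h => h.elim, (), ?_⟩
      rw [sat_bigConj]
      simp only [List.mem_append, List.mem_map]
      rintro χ ((⟨ψ, _, rfl⟩ | ⟨ξ, h, _⟩) | ⟨⟨p, b⟩, hl, rfl⟩)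
      · exact fun x hx => hx.elim
      · simp at h
      · cases b with
        | true => exact hl
        | false => exact nolit_of_consistent hcon hl
    · rw [sat_bigConj] at hv
      refine ⟨extModel M v ls, ?_, none, ?_⟩
      · rintro (_ | a) (_ | b) (_ | b') hb hb' <;>
          simp only [extModel] at hb hb'
        · exact congrArg some (hb.trans hb'.symm)
        · exact congrArg some (hM a b b' hb hb')
      · refine (sat_bigConj (extModel M v ls) _ _).mpr ?_
        simp only [List.mem_append, List.mem_map]
        rintro χ ((⟨ψ, hmem, rfl⟩ | ⟨ξ, hmem, rfl⟩) | ⟨⟨p, b⟩, hl, rfl⟩)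
        · rintro (_ | b) hb
          · exact hb.elim
          · have : b = v := hb
            subst this
            exact (sat_extModel M b ls ψ b).mpr (hv ψ (by simp [hmem]))
        · exact ⟨some v, rfl, (sat_extModel M v ls ξ v).mpr (hv ξ (by simp [hmem]))⟩
        · cases b with
          | true => exact hl
          | false => exact nolit_of_consistent hcon hl

end PoorMansModal
end

section
/- An L formula φ is satisfiable with respect to F≤2 if and only if φ is satisfied at the root of some model based on a binary tree, i.e., a frame whose accessibility relation is the parent-child relation of a rooted tree in which every node has at most two children. -/
namespace PoorMansModal

/-- The unraveling of a model `M` from a world `w`: worlds are paths from `w`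
(stored reversed, current world first). -/
def treeModel (M : Kripke ℕ) (w : M.World) : Kripke ℕ where
  World := { l : List M.World // l.Chain' (fun a b => M.R b a) ∧ l.getLast? = some w }
  nonempty := ⟨⟨[w], List.isChain_singleton _, by simp⟩⟩
  R := fun l l' => ∃ v, l'.val = v :: l.val
  V := fun p l => ∃ u, l.val.head? = some u ∧ M.V p u

theorem path_ne_nil {M : Kripke ℕ} {w : M.World} (l : (treeModel M w).World) :
    l.val ≠ [] := by
  intro h
  have := l.2.2
  rw [h] at this
  simp at this

/-- Current world of a path. -/
def pathHead {M : Kripke ℕ} {w : M.World} (l : (treeModel M w).World) : M.World :=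
  l.val.head (path_ne_nil l)

theorem pathHead_eq {M : Kripke ℕ} {w : M.World} (l : (treeModel M w).World)
    {v : M.World} {t : List M.World} (h : l.val = v :: t) : pathHead l = v := by
  unfold pathHead
  simp only [h]
  rfl

theorem treeR_head {M : Kripke ℕ} {w : M.World} {l l' : (treeModel M w).World}
    (h : (treeModel M w).R l l') : M.R (pathHead l) (pathHead l') := by
  obtain ⟨v, hv⟩ := h
  have hl : l.val = pathHead l :: l.val.tail := by
    exact (List.cons_head_tail (path_ne_nil l)).symm
  have hch := l'.2.1
  rw [hv, hl] at hch
  rw [pathHead_eq l' hv]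
  exact (List.isChain_cons_cons.mp hch).1

/-- Extending a path by a successor. -/
def pathCons {M : Kripke ℕ} {w : M.World} (l : (treeModel M w).World)
    (v : M.World) (hv : M.R (pathHead l) v) : (treeModel M w).World :=
  ⟨v :: l.val, by
    constructor
    · have hl : l.val = pathHead l :: l.val.tail := by
        exact (List.cons_head_tail (path_ne_nil l)).symm
      rw [hl]
      exact List.isChain_cons_cons.mpr ⟨hv, by rw [← hl]; exact l.2.1⟩
    · have hl : l.val = pathHead l :: l.val.tail :=
        (List.cons_head_tail (path_ne_nil l)).symm
      rw [hl, List.getLast?_cons_cons, ← hl]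
      exact l.2.2⟩

theorem pathHead_head? {M : Kripke ℕ} {w : M.World} (l : (treeModel M w).World) :
    l.val.head? = some (pathHead l) := by
  have hl : l.val = pathHead l :: l.val.tail :=
    (List.cons_head_tail (path_ne_nil l)).symm
  conv_lhs => rw [hl]
  rfl

theorem sat_treeModel {M : Kripke ℕ} {w : M.World} (ψ : Fml ℕ) :
    ∀ l : (treeModel M w).World, Sat (treeModel M w) ψ l ↔ Sat M ψ (pathHead l) := by
  induction ψ with
  | var p =>
    intro l
    simp only [Sat, treeModel]
    constructor
    · rintro ⟨u, hu, h⟩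
      have : pathHead l = u := by
        rw [pathHead_head? l] at hu
        exact Option.some_injective _ hu
      rwa [this]
    · intro h
      exact ⟨pathHead l, pathHead_head? l, h⟩
  | nvar p =>
    intro l
    simp only [Sat, treeModel]
    constructor
    · intro h hc
      exact h ⟨pathHead l, pathHead_head? l, hc⟩
    · rintro h ⟨u, hu, hc⟩
      have : pathHead l = u := by
        rw [pathHead_head? l] at hu
        exact Option.some_injective _ hu
      rw [this] at h
      exact h hc
  | neg ψ ih =>
    intro l
    simp only [Sat]
    rw [ih l]
  | and ψ χ ih1 ih2 =>
    intro l
    simp only [Sat]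
    rw [ih1 l, ih2 l]
  | or ψ χ ih1 ih2 =>
    intro l
    simp only [Sat]
    rw [ih1 l, ih2 l]
  | box ψ ih =>
    intro l
    simp only [Sat]
    constructor
    · intro h v hv
      have := h (pathCons l v hv) ⟨v, rfl⟩
      rw [ih] at this
      rwa [pathHead_eq (pathCons l v hv) rfl] at this
    · intro h l' hl'
      rw [ih]
      exact h _ (treeR_head hl')
  | dia ψ ih =>
    intro l
    simp only [Sat]
    constructor
    · rintro ⟨l', hl', hs⟩
      rw [ih] at hs
      exact ⟨pathHead l', treeR_head hl', hs⟩
    · rintro ⟨v, hv, hs⟩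
      refine ⟨pathCons l v hv, ⟨v, rfl⟩, ?_⟩
      rw [ih, pathHead_eq (pathCons l v hv) rfl]
      exact hs
  | tru => intro l; simp [Sat]
  | fls => intro l; simp [Sat]

theorem treeModel_transGen_len {M : Kripke ℕ} {w : M.World}
    {a b : (treeModel M w).World} (h : Relation.TransGen (treeModel M w).R a b) :
    a.val.length < b.val.length := by
  induction h with
  | single h => obtain ⟨v, hv⟩ := h; simp [hv]
  | tail h h' ih =>
    obtain ⟨v, hv⟩ := h'
    have : _ < (v :: _).length := Nat.lt_succ_of_lt ih
    simpa [hv]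

/-- The root of the unraveled model. -/
def treeRoot (M : Kripke ℕ) (w : M.World) : (treeModel M w).World :=
  ⟨[w], List.isChain_singleton _, by simp⟩

theorem treeModel_reach {M : Kripke ℕ} {w : M.World} (l : (treeModel M w).World) :
    Relation.ReflTransGen (treeModel M w).R (treeRoot M w) l := by
  obtain ⟨lv, hch, hlast⟩ := l
  induction lv with
  | nil => simp at hlast
  | cons v rest ih =>
    cases rest with
    | nil =>
      simp at hlast
      subst hlast
      exact Relation.ReflTransGen.refl
    | cons u t =>
      have hch' : (u :: t).Chain' (fun a b => M.R b a) := hch.tail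
      have hlast' : (u :: t).getLast? = some w := by
        rwa [List.getLast?_cons_cons] at hlast
      exact Relation.ReflTransGen.tail (ih hch' hlast') ⟨v, rfl⟩

theorem treeModel_isBinTree {M : Kripke ℕ} (hM : AtMostTwo M.R) (w : M.World) :
    IsBinTree (treeModel M w).R (treeRoot M w) := by
  constructor
  · exact treeModel_reach
  · rintro l ⟨v, hv⟩
    have : l.val = [] := by
      have := (List.cons.injEq v l.val w []).mp hv.symm
      exact this.2
    exact path_ne_nil l this
  · rintro l p p' ⟨v, hv⟩ ⟨v', hv'⟩
    rw [hv] at hv'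
    injection hv' with _ h2
    exact Subtype.ext h2
  · intro l h
    exact absurd (treeModel_transGen_len h) (lt_irrefl _)
  · rintro l l₁ l₂ l₃ h₁ h₂ h₃
    obtain ⟨v₁, hv₁⟩ := h₁
    obtain ⟨v₂, hv₂⟩ := h₂
    obtain ⟨v₃, hv₃⟩ := h₃
    have r₁ : M.R (pathHead l) v₁ := by
      have := treeR_head (l := l) (l' := l₁) ⟨v₁, hv₁⟩
      rwa [pathHead_eq l₁ hv₁] at this
    have r₂ : M.R (pathHead l) v₂ := by
      have := treeR_head (l := l) (l' := l₂) ⟨v₂, hv₂⟩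
      rwa [pathHead_eq l₂ hv₂] at this
    have r₃ : M.R (pathHead l) v₃ := by
      have := treeR_head (l := l) (l' := l₃) ⟨v₃, hv₃⟩
      rwa [pathHead_eq l₃ hv₃] at this
    rcases hM _ _ _ _ r₁ r₂ r₃ with h | h | h
    · left; apply Subtype.ext; rw [hv₁, hv₂, h]
    · right; left; apply Subtype.ext; rw [hv₁, hv₃, h]
    · right; right; apply Subtype.ext; rw [hv₂, hv₃, h]

/-- An `L` formula is satisfiable with respect to `F≤2` iff it is satisfied
at the root of some model based on a binary tree (the parent-child relation of a rooted
tree in which every node has at most two children). -/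
theorem stmt9 (φ : Fml ℕ) (hφ : InL φ) :
    SatLe2 φ ↔
      ∃ (M : Kripke ℕ) (r : M.World), IsBinTree M.R r ∧ Sat M φ r := by
  constructor
  · rintro ⟨M, hM, w, hw⟩
    refine ⟨treeModel M w, treeRoot M w, treeModel_isBinTree hM w, ?_⟩
    rw [sat_treeModel]
    have : pathHead (treeRoot M w) = w := pathHead_eq _ rfl
    rwa [this]
  · rintro ⟨M, r, hbt, hr⟩
    exact ⟨M, hbt.at_most_two_children, r, hr⟩

end PoorMansModal
end
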